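/- arXiv:2103.04595 — 4 statements merged into one kernel-verified Lean document; each statement's English description precedes it below -/
import Mathlib

section
/- Let G be an acyclic digraph and (s,t) a pair of distinct vertices with (s,t) ∉ E(G) such that G+(s,t) is acyclic. Then for every vertex v ∈ R^▽, R_{G+(s,t)}(v) \ R_G(v) = R_△ \ ⋃_{b ∈ R_G(v) ∩ B} R_G(b), and for every vertex v ∉ R^▽, R_{G+(s,t)}(v) \ R_G(v) = ∅. -/
variable {V : Type*}

/-- Reachability in a digraph given by its edge relation `E`
(every vertex reaches itself). -/
def Reach (E : V → V → Prop) : V → V → Prop := Relation.ReflTransGen E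

/-- The reachability set `R_G(v)` of a vertex `v`. -/
def RSet (E : V → V → Prop) (v : V) : Set V := {u | Reach E v u}

/-- The underlying undirected simple graph of a digraph. -/
def Underlying (E : V → V → Prop) : SimpleGraph V where
  Adj u v := u ≠ v ∧ (E u v ∨ E v u)
  symm := ⟨fun u v h => ⟨h.1.symm, h.2.symm⟩⟩
  loopless := ⟨fun v h => h.1 rfl⟩

/-- A polyforest: a digraph with no antiparallel arcs (hence no self-loops)
whose underlying undirected graph is a forest. -/
def IsPolyforest (E : V → V → Prop) : Prop :=
  (∀ u v, E u v → ¬ E v u) ∧ (Underlying E).IsAcyclic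

/-- The weighted reachability number `r_{G,a}(v) = ∑_{u ∈ R_G(v)} a_u`. -/
noncomputable def wReach (E : V → V → Prop) (a : V → ℝ) (v : V) : ℝ :=
  ∑ᶠ u ∈ RSet E v, a u

/-- An acyclic digraph: one with no directed cycles. -/
def IsAcyclicDigraph (E : V → V → Prop) : Prop := ∀ v, ¬ Relation.TransGen E v v

/-- The digraph `G + (s,t)` obtained by inserting the edge `(s,t)`. -/
def AddEdge (E : V → V → Prop) (s t : V) : V → V → Prop :=
  fun u v => E u v ∨ (u = s ∧ v = t)

/-- `R^▽`: the set of vertices that can reach `s` (including `s`). -/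
def RDown (E : V → V → Prop) (s : V) : Set V := {v | Reach E v s}

/-- `R_△`: the set of vertices reachable from `t` (including `t`). -/
def RUp (E : V → V → Prop) (t : V) : Set V := {v | Reach E t v}

/-- The boundary set `B ⊆ R^▽` w.r.t. `G` and `(s,t)`: vertices `b ∈ R^▽` admitting a
directed path in `G` from `b` to some vertex of `R_△` whose internal vertices avoid `R^▽`. -/
def BoundarySet (E : V → V → Prop) (s t : V) : Set V :=
  {b | b ∈ RDown E s ∧ ∃ c w, c ∈ RUp E t ∧ E b w ∧
    Relation.ReflTransGen (fun x y => E x y ∧ x ∉ RDown E s) w c}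

/-- The digraph obtained by deleting the edge set `F`. -/
def DelEdges (E : V → V → Prop) (F : Set (V × V)) : V → V → Prop :=
  fun u v => E u v ∧ (u, v) ∉ F

/-- `F` is a feedback edge set of the digraph `E`: after deleting `F`, the underlying
undirected (multi)graph is acyclic, i.e. no antiparallel pair (nor self-loop) remains and
the underlying simple graph is acyclic. -/
def IsFES (E : V → V → Prop) (F : Set (V × V)) : Prop :=
  (∀ u v, DelEdges E F u v → ¬ DelEdges E F v u) ∧ (Underlying (DelEdges E F)).IsAcyclic

/-- The feedback edge number: the minimum size of a feedback edge set. -/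
noncomputable def feNumber (E : V → V → Prop) : ℕ :=
  sInf {n | ∃ F : Set (V × V), F.ncard = n ∧ IsFES E F}

/-- Vertices are identified iff they lie in the same strongly connected component. -/
def sccSetoid (E : V → V → Prop) : Setoid V where
  r u v := Reach E u v ∧ Reach E v u
  iseqv := ⟨fun _ => ⟨Relation.ReflTransGen.refl, Relation.ReflTransGen.refl⟩,
    fun h => ⟨h.2, h.1⟩,
    fun h₁ h₂ => ⟨Relation.ReflTransGen.trans h₁.1 h₂.1,
      Relation.ReflTransGen.trans h₂.2 h₁.2⟩⟩

/-- The condensation `G^SCC`: its vertices are the strongly connected components of `G`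
(as a quotient), with an edge `C → C'` (for `C ≠ C'`) iff some edge of `G` goes from `C` to `C'`. -/
def Condensation (E : V → V → Prop) :
    Quotient (sccSetoid E) → Quotient (sccSetoid E) → Prop :=
  fun C C' => C ≠ C' ∧ ∃ u v, E u v ∧
    Quotient.mk (sccSetoid E) u = C ∧ Quotient.mk (sccSetoid E) v = C'

private lemma addEdge_split {E : V → V → Prop} {s t a b : V}
    (h : Relation.ReflTransGen (AddEdge E s t) a b) :
    Relation.ReflTransGen E a b ∨
      (Relation.ReflTransGen E a s ∧ Relation.ReflTransGen (AddEdge E s t) t b) := by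
  induction h with
  | refl => exact Or.inl Relation.ReflTransGen.refl
  | tail hac hcb ih =>
    rcases hcb with hE | ⟨rfl, rfl⟩
    · rcases ih with h1 | ⟨h1, h2⟩
      · exact Or.inl (h1.tail hE)
      · exact Or.inr ⟨h1, h2.tail (Or.inl hE)⟩
    · rcases ih with h1 | ⟨h1, _⟩
      · exact Or.inr ⟨h1, Relation.ReflTransGen.refl⟩
      · exact Or.inr ⟨h1, Relation.ReflTransGen.refl⟩

private lemma addEdge_pure {E : V → V → Prop} {s t a b : V}
    (has : ¬ Relation.ReflTransGen E a s)
    (h : Relation.ReflTransGen (AddEdge E s t) a b) :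
    Relation.ReflTransGen E a b := by
  rcases addEdge_split h with h1 | ⟨h1, _⟩
  · exact h1
  · exact absurd h1 has

private lemma restricted_path {E : V → V → Prop} {s x u : V}
    (h : Relation.ReflTransGen E x u) (hx : x ∉ RDown E s) :
    Relation.ReflTransGen (fun a b => E a b ∧ a ∉ RDown E s) x u := by
  revert hx
  induction h using Relation.ReflTransGen.head_induction_on with
  | refl => exact fun _ => Relation.ReflTransGen.refl
  | head hxy _ ih =>
    rename_i p q _
    intro hp
    by_cases hq : q ∈ RDown E s
    · exact absurd (Relation.ReflTransGen.head hxy hq) hp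
    · exact Relation.ReflTransGen.head ⟨hxy, hp⟩ (ih hq)

private lemma find_boundary {E : V → V → Prop} {s v u : V}
    (h : Relation.ReflTransGen E v u) (hu : u ∉ RDown E s) (hv : v ∈ RDown E s) :
    ∃ b w, Relation.ReflTransGen E v b ∧ b ∈ RDown E s ∧ E b w ∧
      Relation.ReflTransGen (fun a b => E a b ∧ a ∉ RDown E s) w u := by
  revert hv
  induction h using Relation.ReflTransGen.head_induction_on with
  | refl => exact fun hv => absurd hv hu
  | head hvx hxu ih =>
    rename_i p q
    intro hp
    by_cases hq : q ∈ RDown E s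
    · obtain ⟨b, w, h1, h2, h3, h4⟩ := ih hq
      exact ⟨b, w, Relation.ReflTransGen.head hvx h1, h2, h3, h4⟩
    · exact ⟨p, q, Relation.ReflTransGen.refl, hp, hvx, restricted_path hxu hq⟩

/-- If `G` is acyclic, `(s,t) ∉ E(G)` with `s ≠ t`, and `G + (s,t)` is
acyclic, then for `v ∈ R^▽` we have
`R_{G+(s,t)}(v) \ R_G(v) = R_△ \ ⋃_{b ∈ R_G(v) ∩ B} R_G(b)`, and for `v ∉ R^▽` the
difference is empty. -/
theorem reach_set_difference_formula {V : Type*} [Fintype V] (E : V → V → Prop) (s t : V)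
    (hG : IsAcyclicDigraph E) (hst : s ≠ t) (hstE : ¬ E s t)
    (hG' : IsAcyclicDigraph (AddEdge E s t)) (v : V) :
    (v ∈ RDown E s →
      RSet (AddEdge E s t) v \ RSet E v
        = RUp E t \ ⋃ b ∈ RSet E v ∩ BoundarySet E s t, RSet E b) ∧
    (v ∉ RDown E s → RSet (AddEdge E s t) v \ RSet E v = ∅) := by
  -- `t` cannot reach `s` in `G`, else `G+(s,t)` has a cycle at `s`.
  have hts : ¬ Relation.ReflTransGen E t s := by
    intro h
    have h' : Relation.ReflTransGen (AddEdge E s t) t s :=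
      Relation.ReflTransGen.mono (p := AddEdge E s t) (fun a b hab => Or.inl hab) _ _ h
    exact hG' t (Relation.TransGen.trans_right h'
      (Relation.TransGen.single (show AddEdge E s t s t from Or.inr ⟨rfl, rfl⟩)))
  constructor
  · intro hv
    ext u
    simp only [Set.mem_diff, Set.mem_iUnion, Set.mem_inter_iff, not_exists]
    constructor
    · rintro ⟨hu1, hu2⟩
      rcases addEdge_split hu1 with h1 | ⟨_, h2⟩
      · exact absurd h1 hu2
      have htu : Relation.ReflTransGen E t u := addEdge_pure hts h2
      refine ⟨htu, ?_⟩
      rintro b ⟨hvb, _⟩ hbu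
      exact hu2 (Relation.ReflTransGen.trans hvb hbu)
    · rintro ⟨htu, hB⟩
      have hu' : u ∉ RDown E s := fun hus => hts (htu.trans hus)
      constructor
      · have h1 : Relation.ReflTransGen (AddEdge E s t) v s :=
          Relation.ReflTransGen.mono (p := AddEdge E s t) (fun a b hab => Or.inl hab) _ _ hv
        have h2 : Relation.ReflTransGen (AddEdge E s t) t u :=
          Relation.ReflTransGen.mono (p := AddEdge E s t) (fun a b hab => Or.inl hab) _ _ htu
        exact (h1.tail (Or.inr ⟨rfl, rfl⟩)).trans h2
      · intro hvu
        obtain ⟨b, w, h1, h2, h3, h4⟩ := find_boundary hvu hu' hv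
        have hbu : Relation.ReflTransGen E b u :=
          Relation.ReflTransGen.head h3 (Relation.ReflTransGen.mono (p := E) (fun a b (hab : E a b ∧ a ∉ RDown E s) => hab.1) _ _ h4)
        exact hB b ⟨h1, h2, u, w, htu, h3, h4⟩ hbu
  · intro hv
    ext u
    simp only [Set.mem_diff, Set.mem_empty_iff_false, iff_false, not_and, not_not]
    intro hu
    exact addEdge_pure hv hu
end

section
/- Let G be an acyclic digraph, (s,t) a pair of distinct vertices with (s,t) ∉ E(G) such that G+(s,t) is acyclic, and a : V(G) → ℝ a vertex weighting. Then for every vertex v ∈ R^▽, the weighted reachability number satisfies r_{G+(s,t),a}(v) = r_{G,a}(v) + a(R_△ \ ⋃_{b ∈ R_G(v) ∩ B} R_G(b)). -/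
variable {V : Type*}

private lemma rup_disjoint_rdown {V : Type*} (E : V → V → Prop) (s t : V)
    (hG' : IsAcyclicDigraph (AddEdge E s t)) {u : V}
    (hu : u ∈ RUp E t) (hd : u ∈ RDown E s) : False := by
  have h1 : Relation.ReflTransGen (AddEdge E s t) t s :=
    Relation.ReflTransGen.mono (r := E) (p := AddEdge E s t) (fun a b h => Or.inl h) _ _ (Relation.ReflTransGen.trans hu hd)
  exact hG' t (Relation.TransGen.tail' h1 (Or.inr ⟨rfl, rfl⟩))

private lemma boundary_decomp {V : Type*} (E : V → V → Prop) (s t : V) {v u : V}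
    (h : Relation.ReflTransGen E v u) (hu : u ∈ RUp E t) :
    Relation.ReflTransGen (fun x y => E x y ∧ x ∉ RDown E s) v u ∨
      ∃ b, b ∈ BoundarySet E s t ∧ Reach E v b ∧ Reach E b u := by
  induction h using Relation.ReflTransGen.head_induction_on with
  | refl => exact Or.inl Relation.ReflTransGen.refl
  | head e p ih =>
    rename_i x w
    rcases ih with hrest | ⟨b, hb, hwb, hbu⟩
    · by_cases hx : x ∈ RDown E s
      · exact Or.inr ⟨x, ⟨hx, u, w, hu, e, hrest⟩, Relation.ReflTransGen.refl,
          Relation.ReflTransGen.head e p⟩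
      · exact Or.inl (Relation.ReflTransGen.head ⟨e, hx⟩ hrest)
    · exact Or.inr ⟨b, hb, Relation.ReflTransGen.head e hwb, hbu⟩

private lemma rset_add_edge {V : Type*} (E : V → V → Prop) (s t : V) {v : V}
    (hv : v ∈ RDown E s) :
    RSet (AddEdge E s t) v = RSet E v ∪ RUp E t := by
  ext u
  constructor
  · intro h
    induction h with
    | refl => exact Or.inl Relation.ReflTransGen.refl
    | tail h' e ih =>
      rcases e with e | ⟨rfl, rfl⟩
      · rcases ih with h1 | h1
        · exact Or.inl (h1.tail e)
        · exact Or.inr (h1.tail e)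
      · exact Or.inr Relation.ReflTransGen.refl
  · rintro (h | h)
    · exact Relation.ReflTransGen.mono (r := E) (p := AddEdge E s t) (fun a b h => Or.inl h) _ _ h
    · have hvt : Relation.ReflTransGen (AddEdge E s t) v t :=
        Relation.ReflTransGen.tail (Relation.ReflTransGen.mono (r := E) (p := AddEdge E s t) (fun a b h => Or.inl h) _ _ hv) (Or.inr ⟨rfl, rfl⟩)
      exact hvt.trans (Relation.ReflTransGen.mono (r := E) (p := AddEdge E s t) (fun a b h => Or.inl h) _ _ h)

/-- If `G` is acyclic, `(s,t) ∉ E(G)` with `s ≠ t`, `G + (s,t)` is acyclic,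
and `a` is a vertex weighting, then for every `v ∈ R^▽`,
`r_{G+(s,t),a}(v) = r_{G,a}(v) + a(R_△ \ ⋃_{b ∈ R_G(v) ∩ B} R_G(b))`. -/
theorem wreach_update_formula {V : Type*} [Fintype V] (E : V → V → Prop) (s t : V)
    (hG : IsAcyclicDigraph E) (hst : s ≠ t) (hstE : ¬ E s t)
    (hG' : IsAcyclicDigraph (AddEdge E s t)) (a : V → ℝ)
    (v : V) (hv : v ∈ RDown E s) :
    wReach (AddEdge E s t) a v
      = wReach E a v
        + ∑ᶠ u ∈ RUp E t \ ⋃ b ∈ RSet E v ∩ BoundarySet E s t, RSet E b, a u := by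
  have hsets : RUp E t \ ⋃ b ∈ RSet E v ∩ BoundarySet E s t, RSet E b
      = RUp E t \ RSet E v := by
    ext u
    simp only [Set.mem_diff, Set.mem_iUnion, Set.mem_inter_iff, exists_prop]
    constructor
    · rintro ⟨hu, hnb⟩
      refine ⟨hu, fun hvu => hnb ?_⟩
      rcases boundary_decomp E s t hvu hu with hrest | ⟨b, hb, hvb, hbu⟩
      · cases hrest.cases_head with
        | inl h => exact absurd (h ▸ hv) (fun hd => rup_disjoint_rdown E s t hG' hu hd)
        | inr h => exact absurd hv h.choose_spec.1.2
      · exact ⟨b, ⟨hvb, hb⟩, hbu⟩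
    · rintro ⟨hu, hnv⟩
      exact ⟨hu, fun ⟨b, ⟨hvb, _⟩, hbu⟩ => hnv (hvb.trans hbu)⟩
  rw [hsets]
  have hdisj : Disjoint (RSet E v) (RUp E t \ RSet E v) := Set.disjoint_sdiff_right
  have hunion : RSet (AddEdge E s t) v = RSet E v ∪ (RUp E t \ RSet E v) := by
    rw [rset_add_edge E s t hv, Set.union_diff_self]
  rw [wReach, hunion, finsum_mem_union hdisj (Set.toFinite _) (Set.toFinite _)]
  rfl
end

section
/- Let G be an acyclic digraph and (s,t) a pair of distinct vertices with (s,t) ∉ E(G) such that G+(s,t) is acyclic. If a vertex v ∈ R^▽ \ B has exactly one out-neighbor in the induced subgraph G[R^▽], say w, then v and w have the same restricted boundary set; i.e., R_G(v) ∩ B = R_G(w) ∩ B. -/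
variable {V : Type*}

/-- If `G` is acyclic, `(s,t) ∉ E(G)` with `s ≠ t`, `G + (s,t)` is acyclic,
and `v ∈ R^▽ \ B` has exactly one out-neighbor `w` in the induced subgraph `G[R^▽]`,
then `v` and `w` have the same restricted boundary set: `R_G(v) ∩ B = R_G(w) ∩ B`. -/
theorem restricted_boundary_set_eq_of_unique_outneighbor {V : Type*} [Fintype V]
    (E : V → V → Prop) (s t : V)
    (hG : IsAcyclicDigraph E) (hst : s ≠ t) (hstE : ¬ E s t)
    (hG' : IsAcyclicDigraph (AddEdge E s t)) (v w : V)
    (hv : v ∈ RDown E s) (hvB : v ∉ BoundarySet E s t)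
    (hw : w ∈ RDown E s) (hvw : E v w)
    (huniq : ∀ w', w' ∈ RDown E s → E v w' → w' = w) :
    RSet E v ∩ BoundarySet E s t = RSet E w ∩ BoundarySet E s t := by
  ext b
  constructor
  · rintro ⟨hreach, hB⟩
    rcases (Relation.ReflTransGen.cases_head hreach) with rfl | ⟨c, hvc, hcb⟩
    · exact absurd hB hvB
    · have hc : c ∈ RDown E s := Relation.ReflTransGen.trans hcb hB.1
      exact ⟨(huniq c hc hvc) ▸ hcb, hB⟩
  · rintro ⟨hreach, hB⟩
    exact ⟨Relation.ReflTransGen.head hvw hreach, hB⟩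
end

section
/- Let G be an acyclic digraph and (s,t) a pair of distinct vertices with (s,t) ∉ E(G) such that G+(s,t) is acyclic. Then for every vertex v ∈ R^▽, every vertex of R_△ that v can reach in G is reachable from some boundary that v can reach; i.e., R_G(v) ∩ R_△ ⊆ ⋃_{b ∈ R_G(v) ∩ B} R_G(b). -/
variable {V : Type*}

private lemma rdown_closed {V : Type*} {E : V → V → Prop} {s x y : V}
    (h : E x y) (hy : y ∈ RDown E s) : x ∈ RDown E s :=
  Relation.ReflTransGen.head h hy

private lemma restricted_of_not_rdown {V : Type*} {E : V → V → Prop} {s x u : V}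
    (h : Reach E x u) (hx : x ∉ RDown E s) :
    Relation.ReflTransGen (fun a b => E a b ∧ a ∉ RDown E s) x u := by
  induction h using Relation.ReflTransGen.head_induction_on with
  | refl => exact Relation.ReflTransGen.refl
  | head hxy hyu ih =>
    rename_i x' y'
    have hy : y' ∉ RDown E s := fun h' => hx (rdown_closed hxy h')
    exact Relation.ReflTransGen.head ⟨hxy, hx⟩ (ih hy)

private lemma exists_exit {V : Type*} {E : V → V → Prop} {s v u : V}
    (h : Reach E v u) (hv : v ∈ RDown E s) (hu : u ∉ RDown E s) :
    ∃ b w, Reach E v b ∧ b ∈ RDown E s ∧ E b w ∧ w ∉ RDown E s ∧ Reach E w u := by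
  induction h using Relation.ReflTransGen.head_induction_on with
  | refl => exact absurd hv hu
  | head hxy hyu ih =>
    rename_i x y
    by_cases hy : y ∈ RDown E s
    · obtain ⟨b, w, hb1, hb2, hb3, hb4, hb5⟩ := ih hy
      exact ⟨b, w, Relation.ReflTransGen.head hxy hb1, hb2, hb3, hb4, hb5⟩
    · exact ⟨x, y, Relation.ReflTransGen.refl, hv, hxy, hy, hyu⟩

/-- If `G` is acyclic, `(s,t) ∉ E(G)` with `s ≠ t`, and `G + (s,t)` is
acyclic, then for every `v ∈ R^▽`, every vertex of `R_△` reachable from `v` in `G` is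
reachable from some boundary reachable from `v`:
`R_G(v) ∩ R_△ ⊆ ⋃_{b ∈ R_G(v) ∩ B} R_G(b)`. -/
theorem reach_inter_rup_subset_boundary_reach {V : Type*} [Fintype V]
    (E : V → V → Prop) (s t : V)
    (hG : IsAcyclicDigraph E) (hst : s ≠ t) (hstE : ¬ E s t)
    (hG' : IsAcyclicDigraph (AddEdge E s t)) (v : V) (hv : v ∈ RDown E s) :
    RSet E v ∩ RUp E t ⊆ ⋃ b ∈ RSet E v ∩ BoundarySet E s t, RSet E b := by
  rintro u ⟨hvu, htu⟩
  have hu : u ∉ RDown E s := by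
    intro hus
    apply hG' s
    have h1 : Relation.ReflTransGen (AddEdge E s t) t u :=
      Relation.ReflTransGen.mono (p := AddEdge E s t) (fun a b h => Or.inl h) t u htu
    have h2 : Relation.ReflTransGen (AddEdge E s t) u s :=
      Relation.ReflTransGen.mono (p := AddEdge E s t) (fun a b h => Or.inl h) u s hus
    exact Relation.TransGen.head' (Or.inr ⟨rfl, rfl⟩) (h1.trans h2)
  obtain ⟨b, w, hb1, hb2, hb3, hb4, hb5⟩ := exists_exit hvu hv hu
  refine Set.mem_iUnion₂.mpr ⟨b, ⟨hb1, hb2, u, w, htu, hb3, restricted_of_not_rdown hb5 hb4⟩, Relation.ReflTransGen.head hb3 hb5⟩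
end
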